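/- arXiv:1906.00187 — 2 statements merged into one kernel-verified Lean document; each statement's English description precedes it below -/
import Mathlib

section
/- For every pair of nonnegative integers m, n, the functions φ^s_m(z) = (π m!)^{−1/2} ((1 − s²)/(2s))^{(m+1)/2} e^{−α z²} z^m satisfy ∫_ℂ φ^s_m(z) · conj(φ^s_n(z)) · ω_s(z) dλ(z) = δ_{m,n}; i.e., (φ^s_m)_{m∈ℕ} is an orthonormal system in L²(ℂ, ω_s dλ). -/
open MeasureTheory Complex

/-- The weight `ω_s(z) = exp(α(z² + conj z²) - ν |z|²)` with `α = (1+s²)/(4s)`,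
`ν = (1-s²)/(2s)`; the exponent is real since `z² + conj z²` is real. -/
noncomputable def omegaS (s : ℝ) (z : ℂ) : ℝ :=
  Real.exp (((1 + s ^ 2) / (4 * s)) * (z ^ 2 + (starRingEnd ℂ z) ^ 2).re
    - ((1 - s ^ 2) / (2 * s)) * ‖z‖ ^ 2)

/-- `φ^s_m(z) = (π m!)^{-1/2} ((1-s²)/(2s))^{(m+1)/2} e^{-α z²} z^m` with `α = (1+s²)/(4s)`. -/
noncomputable def phiS (s : ℝ) (m : ℕ) (z : ℂ) : ℂ :=
  (1 / (Real.sqrt (Real.pi * m.factorial)) : ℂ)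
    * (Real.sqrt (((1 - s ^ 2) / (2 * s)) ^ (m + 1)) : ℂ)
    * Complex.exp (-(((1 + s ^ 2) / (4 * s) : ℝ) : ℂ) * z ^ 2) * z ^ m

section Aux
open Set Real

lemma angularAux (k : ℤ) :
    ∫ θ in Ioo (-π) π, Complex.exp (k * θ * Complex.I)
      = if k = 0 then (2 * π : ℂ) else 0 := by
  rw [← MeasureTheory.integral_Ioc_eq_integral_Ioo,
    ← intervalIntegral.integral_of_le (by linarith [Real.pi_pos] : -π ≤ π)]
  rcases eq_or_ne k 0 with hk | hk
  · simp [hk, two_mul]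
  · simp only [hk, if_false]
    have h1 : ∀ θ : ℝ, (k : ℂ) * θ * Complex.I = ((k : ℂ) * Complex.I) * θ := by
      intro θ; ring
    simp_rw [h1]
    rw [integral_exp_mul_complex (by
      exact mul_ne_zero (by exact_mod_cast hk) Complex.I_ne_zero)]
    have h2 : (k : ℂ) * Complex.I * π = k * (π * Complex.I) := by push_cast; ring
    have h3 : (k : ℂ) * Complex.I * (-π : ℝ) = ((-k : ℤ) : ℂ) * (π * Complex.I) := by push_cast; ring
    rw [h2, h3, Complex.exp_int_mul, Complex.exp_int_mul, Complex.exp_pi_mul_I]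
    rw [zpow_neg, show ((-1 : ℂ) ^ k)⁻¹ = ((-1 : ℂ)⁻¹) ^ k from (inv_zpow _ _).symm]
    norm_num
lemma radialAux {b : ℝ} (hb : 0 < b) (j : ℕ) :
    ∫ x in Ioi (0 : ℝ), x ^ (2 * j + 1) * Real.exp (-b * x ^ 2)
      = j.factorial / (2 * b ^ (j + 1)) := by
  have h := _root_.integral_rpow_mul_exp_neg_mul_rpow (p := 2) (q := (2 * j + 1 : ℕ))
    (by norm_num) (by push_cast; linarith [Nat.cast_nonneg (α := ℝ) j]) hb
  rw [show ∫ x in Ioi (0 : ℝ), x ^ (2 * j + 1) * Real.exp (-b * x ^ 2)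
      = ∫ x in Ioi (0 : ℝ), x ^ ((2 * j + 1 : ℕ) : ℝ) * Real.exp (-b * x ^ (2 : ℝ)) from ?_, h]
  · rw [show (((2 * j + 1 : ℕ) : ℝ) + 1) / 2 = ((j : ℝ) + 1) by push_cast; ring,
      show -(((2 * j + 1 : ℕ) : ℝ) + 1) / 2 = -((j + 1 : ℕ) : ℝ) by push_cast; ring,
      Real.rpow_neg hb.le, Real.rpow_natCast, Real.Gamma_nat_eq_factorial]
    have : (b : ℝ) ^ (j + 1) ≠ 0 := by positivity
    field_simp
  · refine setIntegral_congr_fun measurableSet_Ioi fun x hx => ?_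
    rw [Real.rpow_natCast, show (2 : ℝ) = ((2 : ℕ) : ℝ) by norm_num, Real.rpow_natCast]
lemma keyAux {b : ℝ} (hb : 0 < b) (m n : ℕ) :
    ∫ z : ℂ, z ^ m * (starRingEnd ℂ z) ^ n * Complex.exp (-((b * ‖z‖ ^ 2 : ℝ) : ℂ))
      = if m = n then ((π * m.factorial / b ^ (m + 1) : ℝ) : ℂ) else 0 := by
  rw [← Complex.integral_comp_polarCoord_symm, polarCoord_target]
  have hfun : ∀ p : ℝ × ℝ,
      p.1 • ((Complex.polarCoord.symm p) ^ m
          * (starRingEnd ℂ (Complex.polarCoord.symm p)) ^ n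
          * Complex.exp (-((b * ‖Complex.polarCoord.symm p‖ ^ 2 : ℝ) : ℂ)))
        = ((p.1 ^ (m + n + 1) * Real.exp (-b * p.1 ^ 2) : ℝ) : ℂ)
          * Complex.exp ((((m : ℤ) - n : ℤ) : ℂ) * p.2 * Complex.I) := by
    rintro ⟨r, θ⟩
    have hz : Complex.polarCoord.symm (r, θ) = (r : ℂ) * Complex.exp (θ * Complex.I) := by
      rw [Complex.polarCoord_symm_apply, Complex.exp_mul_I]
      simp [Complex.ofReal_cos, Complex.ofReal_sin]
    have habs : ‖Complex.polarCoord.symm (r, θ)‖ ^ 2 = r ^ 2 := by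
      rw [Complex.norm_polarCoord_symm]; exact sq_abs r
    have hconj : (starRingEnd ℂ) (Complex.polarCoord.symm (r, θ))
        = (r : ℂ) * Complex.exp (-(θ * Complex.I)) := by
      rw [hz, map_mul, Complex.conj_ofReal, ← Complex.exp_conj]
      congr 1
      simp
    rw [habs, hconj, hz]
    calc (r : ℝ) • ((↑r * Complex.exp (↑θ * Complex.I)) ^ m
          * (↑r * Complex.exp (-(↑θ * Complex.I))) ^ n
          * Complex.exp (-((b * r ^ 2 : ℝ) : ℂ)))
        = (r : ℂ) ^ (m + n + 1) * Complex.exp ((m : ℂ) * (↑θ * Complex.I)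
            + (n : ℂ) * (-(↑θ * Complex.I)) + (-((b * r ^ 2 : ℝ) : ℂ))) := by
          rw [Complex.exp_add, Complex.exp_add, Complex.exp_nat_mul, Complex.exp_nat_mul,
            Complex.real_smul]
          ring
      _ = ((r ^ (m + n + 1) * Real.exp (-b * r ^ 2) : ℝ) : ℂ)
          * Complex.exp ((((m : ℤ) - n : ℤ) : ℂ) * θ * Complex.I) := by
          rw [show ((m : ℂ) * (↑θ * Complex.I) + (n : ℂ) * (-(↑θ * Complex.I))
              + (-((b * r ^ 2 : ℝ) : ℂ)))
            = ((((m : ℤ) - n : ℤ) : ℂ) * θ * Complex.I) + ((-(b * r ^ 2) : ℝ) : ℂ) by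
              push_cast; ring, Complex.exp_add]
          push_cast
          ring
  simp_rw [hfun]
  rw [MeasureTheory.Measure.volume_eq_prod,
    setIntegral_prod_mul (fun r : ℝ => ((r ^ (m + n + 1) * Real.exp (-b * r ^ 2) : ℝ) : ℂ))
      (fun θ : ℝ => Complex.exp ((((m : ℤ) - n : ℤ) : ℂ) * θ * Complex.I)),
    show (∫ x in Ioi (0 : ℝ), ((x ^ (m + n + 1) * Real.exp (-b * x ^ 2) : ℝ) : ℂ))
        = ((∫ x in Ioi (0 : ℝ), x ^ (m + n + 1) * Real.exp (-b * x ^ 2) : ℝ) : ℂ) from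
      integral_ofReal,
    angularAux]
  rcases eq_or_ne m n with h | h
  · subst h
    rw [if_pos rfl, if_pos (sub_self (m : ℤ)), show m + m + 1 = 2 * m + 1 by omega,
      radialAux hb]
    push_cast
    have hbne : (b : ℂ) ^ (m + 1) ≠ 0 := by
      exact_mod_cast pow_ne_zero _ (ne_of_gt hb)
    field_simp
  · have hk : ((m : ℤ) - n : ℤ) ≠ 0 := by
      simpa [sub_eq_zero] using fun hmn => h (by exact_mod_cast hmn)
    rw [if_neg hk, if_neg h, mul_zero]

end Aux

open Set Real in
/-- Orthonormality of the family `(φ^s_m)` in `L²(ℂ, ω_s dλ)`. -/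
theorem statement1 (s : ℝ) (hs0 : 0 < s) (hs1 : s < 1) (m n : ℕ) :
    ∫ z : ℂ, phiS s m z * (starRingEnd ℂ) (phiS s n z) * (omegaS s z : ℂ)
      = if m = n then 1 else 0 := by
  set ν : ℝ := (1 - s ^ 2) / (2 * s) with hνdef
  set α : ℝ := (1 + s ^ 2) / (4 * s) with hαdef
  have hν0 : 0 < ν := by
    apply div_pos (by nlinarith) (by linarith)
  have hfun : ∀ z : ℂ, phiS s m z * (starRingEnd ℂ) (phiS s n z) * (omegaS s z : ℂ)
      = ((1 / Real.sqrt (π * m.factorial) * Real.sqrt (ν ^ (m + 1))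
          * (1 / Real.sqrt (π * n.factorial) * Real.sqrt (ν ^ (n + 1))) : ℝ) : ℂ)
        * (z ^ m * (starRingEnd ℂ z) ^ n
            * Complex.exp (-((ν * ‖z‖ ^ 2 : ℝ) : ℂ))) := by
    intro z
    have ht : (((z ^ 2 + (starRingEnd ℂ z) ^ 2).re : ℝ) : ℂ)
        = z ^ 2 + (starRingEnd ℂ z) ^ 2 := by
      refine Complex.conj_eq_iff_re.mp ?_
      rw [map_add, map_pow, map_pow, Complex.conj_conj]
      ring
    unfold phiS omegaS
    rw [← hνdef, ← hαdef]
    rw [show -((ν * ‖z‖ ^ 2 : ℝ) : ℂ)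
        = (-(α : ℂ) * z ^ 2) + (-(α : ℂ) * (starRingEnd ℂ z) ^ 2)
          + ((α * (z ^ 2 + (starRingEnd ℂ z) ^ 2).re - ν * ‖z‖ ^ 2 : ℝ) : ℂ) by
      push_cast
      rw [ht]
      ring]
    rw [Complex.exp_add, Complex.exp_add, ← Complex.ofReal_exp]
    rw [map_mul, map_mul, map_mul, map_pow]
    rw [← Complex.exp_conj]
    push_cast
    simp only [map_mul, map_neg, map_pow, Complex.conj_ofReal, map_div₀, map_one]
    ring
  simp_rw [hfun]
  rw [MeasureTheory.integral_const_mul, keyAux hν0 m n]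
  rcases eq_or_ne m n with h | h
  · subst h
    rw [if_pos rfl, if_pos rfl, ← Complex.ofReal_mul]
    rw [show (1 / Real.sqrt (π * m.factorial) * Real.sqrt (ν ^ (m + 1))
        * (1 / Real.sqrt (π * m.factorial) * Real.sqrt (ν ^ (m + 1))))
        * (π * m.factorial / ν ^ (m + 1)) = 1 from ?_, Complex.ofReal_one]
    have hA : (0 : ℝ) < π * m.factorial := by
      have := Real.pi_pos
      have := Nat.cast_pos (α := ℝ).mpr m.factorial_pos
      positivity
    have hB : (0 : ℝ) < ν ^ (m + 1) := by positivity
    rw [show (1 / Real.sqrt (π * m.factorial) * Real.sqrt (ν ^ (m + 1))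
        * (1 / Real.sqrt (π * m.factorial) * Real.sqrt (ν ^ (m + 1))))
        = (Real.sqrt (ν ^ (m + 1)) * Real.sqrt (ν ^ (m + 1)))
          / (Real.sqrt (π * m.factorial) * Real.sqrt (π * m.factorial)) by ring,
      Real.mul_self_sqrt hB.le, Real.mul_self_sqrt hA.le]
    field_simp
  · rw [if_neg h, if_neg h, mul_zero]
end

section
/- The kernel K^s reproduces the space X_s(ℂ): for every function f : ℂ → ℂ that is holomorphic on all of ℂ and satisfies ∫_ℂ |f(z)|² ω_s(z) dλ(z) < ∞, and every z ∈ ℂ, one has f(z) = ∫_ℂ K^s(z,w) f(w) ω_s(w) dλ(w), where K^s(z,w) = ((1 − s²)/(2πs)) · exp(−α(z² + conj(w)²) + ν z conj(w)). -/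
open MeasureTheory Complex Real

/-- Reproducing kernel `K^s(z,w) = ((1-s²)/(2πs)) exp(-α(z² + conj w²) + ν z conj w)`. -/
noncomputable def Kker (s : ℝ) (z w : ℂ) : ℂ :=
  (((1 - s ^ 2) / (2 * Real.pi * s) : ℝ) : ℂ) *
    Complex.exp (-(((1 + s ^ 2) / (4 * s) : ℝ) : ℂ) * (z ^ 2 + (starRingEnd ℂ w) ^ 2)
      + (((1 - s ^ 2) / (2 * s) : ℝ) : ℂ) * z * starRingEnd ℂ w)

lemma circle_mean_value (h : ℂ → ℂ) (hh : Differentiable ℂ h) {R : ℝ} (hR : 0 < R) :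
    ∫ θ in (0:ℝ)..(2*π), h (circleMap 0 R θ) = (2*π : ℝ) • h 0 := by
  have hc : (∮ w in C(0, R), (w - 0)⁻¹ • h w) = (2 * ↑π * I) • h 0 :=
    (hh.diffContOnCl).circleIntegral_sub_inv_smul (by simpa using hR)
  rw [circleIntegral] at hc
  have hne : ∀ θ : ℝ, circleMap 0 R θ ≠ 0 := fun θ => by
    simpa using circleMap_ne_center (ne_of_gt hR) (c := 0) (θ := θ)
  have : ∀ θ : ℝ, deriv (circleMap 0 R) θ • (circleMap 0 R θ - 0)⁻¹ • h (circleMap 0 R θ)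
      = I * h (circleMap 0 R θ) := by
    intro θ
    rw [deriv_circleMap, sub_zero, smul_eq_mul, smul_eq_mul]
    field_simp [hne θ]
  simp only [this] at hc
  rw [intervalIntegral.integral_const_mul] at hc
  have h2 : (2 * ↑π * I) • h 0 = I * ((2*π : ℝ) • h 0) := by
    simp [smul_eq_mul]; ring
  rw [h2] at hc
  exact mul_left_cancel₀ I_ne_zero hc

lemma rot_mean_value (h : ℂ → ℂ) (hh : Differentiable ℂ h) (u : ℂ) :
    ∫ φ in Set.Ioc (0:ℝ) (2*π), h (Complex.exp (φ * I) * u) = (2*π : ℝ) • h 0 := by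
  rcases eq_or_ne u 0 with rfl | hu
  · simp only [mul_zero]
    rw [setIntegral_const]
    congr 1
    rw [Real.volume_real_Ioc_of_le (by positivity)]
    rw [sub_zero]
  · have hR : 0 < ‖u‖ := norm_pos_iff.mpr hu
    have key : ∀ φ : ℝ, Complex.exp (φ * I) * u = circleMap 0 (‖u‖) (φ + u.arg) := by
      intro φ
      rw [circleMap]
      rw [zero_add, Complex.ofReal_add, add_mul, Complex.exp_add]
      conv_lhs => rw [← Complex.norm_mul_exp_arg_mul_I u]
      ring
    simp only [key]
    rw [← intervalIntegral.integral_of_le (by positivity)]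
    rw [intervalIntegral.integral_comp_add_right (fun θ => h (circleMap 0 (‖u‖) θ)) u.arg]
    have hper : Function.Periodic (fun θ => h (circleMap 0 (‖u‖) θ)) (2*π) :=
      fun θ => by simp [(periodic_circleMap 0 (‖u‖) θ)]
    have := hper.intervalIntegral_add_eq u.arg 0
    rw [zero_add] at this
    rw [show (0:ℝ) + u.arg = u.arg by ring, show 2*π + u.arg = u.arg + 2*π by ring, this]
    exact circle_mean_value h hh hR

lemma gauss_int (ν : ℝ) (hν : 0 < ν) :
    Integrable (fun u : ℂ => rexp (-ν * ‖u‖ ^ 2)) := by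
  have h1 := (GaussianFourier.integrable_cexp_neg_mul_sq_norm_add (V := ℂ) (b := (ν:ℂ))
    (by simpa using hν) 0 0).norm
  refine h1.congr (Filter.Eventually.of_forall fun u => ?_)
  simp [Complex.norm_exp]
  left; norm_cast

lemma gauss_val (ν : ℝ) (hν : 0 < ν) :
    ∫ u : ℂ, rexp (-ν * ‖u‖ ^ 2) = π / ν := by
  have h1 := GaussianFourier.integral_rexp_neg_mul_sq_norm (V := ℂ) hν
  rw [Complex.finrank_real_complex] at h1
  rw [h1]
  norm_num

lemma fock_zero (ν : ℝ) (hν : 0 < ν) (h : ℂ → ℂ) (hh : Differentiable ℂ h)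
    (hint : Integrable (fun u : ℂ => h u * ((rexp (-ν * ‖u‖ ^ 2) : ℝ) : ℂ))) :
    ∫ u : ℂ, h u * ((rexp (-ν * ‖u‖ ^ 2) : ℝ) : ℂ) = ((π / ν : ℝ) : ℂ) * h 0 := by
  set F : ℂ → ℂ := fun u => h u * ((rexp (-ν * ‖u‖ ^ 2) : ℝ) : ℂ) with hF
  have hFcont : Continuous F := by
    refine hh.continuous.mul (Complex.continuous_ofReal.comp (Real.continuous_exp.comp ?_))
    exact (continuous_const.mul (continuous_norm.pow 2))
  have hrotn : ∀ c : Circle, (∫ u : ℂ, ‖F ((c:ℂ) * u)‖) = ∫ u : ℂ, ‖F u‖ := fun c => by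
    simpa [rotation_apply] using ((rotation c).measurePreserving).integral_comp
      ((rotation c).toHomeomorph.measurableEmbedding) (fun u => ‖F u‖)
  have hrot : ∀ c : Circle, (∫ u : ℂ, F ((c:ℂ) * u)) = ∫ u : ℂ, F u := fun c => by
    simpa [rotation_apply] using ((rotation c).measurePreserving).integral_comp
      ((rotation c).toHomeomorph.measurableEmbedding) F
  have hroti : ∀ c : Circle, Integrable (fun u : ℂ => F ((c:ℂ) * u)) := by
    intro c
    have hemb := ((rotation c).measurePreserving).integrable_comp_emb
      ((rotation c).toHomeomorph.measurableEmbedding) (g := F)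
    have : Integrable (F ∘ (rotation c)) := hemb.mpr hint
    simpa [Function.comp_def, rotation_apply] using this
  set μφ := volume.restrict (Set.Ioc (0:ℝ) (2*π)) with hμφ
  have hΦcont : Continuous (fun p : ℝ × ℂ => F (Complex.exp (p.1 * I) * p.2)) := by
    refine hFcont.comp (Continuous.mul ?_ continuous_snd)
    exact Complex.continuous_exp.comp ((Complex.continuous_ofReal.comp continuous_fst).mul
      continuous_const)
  have hΦint : Integrable (fun p : ℝ × ℂ => F (Complex.exp (p.1 * I) * p.2)) (μφ.prod volume) := by
    rw [MeasureTheory.integrable_prod_iff hΦcont.aestronglyMeasurable]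
    constructor
    · refine Filter.Eventually.of_forall fun φ => ?_
      simpa [Circle.coe_exp] using hroti (Circle.exp φ)
    · have heq : ∀ φ : ℝ, (∫ u : ℂ, ‖F (Complex.exp (↑φ * I) * u)‖) = ∫ u : ℂ, ‖F u‖ := by
        intro φ
        simpa [Circle.coe_exp] using hrotn (Circle.exp φ)
      simp only [heq]
      exact integrable_const _
  have swap := MeasureTheory.integral_integral_swap
    (f := fun (φ : ℝ) (u : ℂ) => F (Complex.exp (↑φ * I) * u)) (μ := μφ) hΦint
  -- LHS of swap
  have hL : (∫ φ : ℝ, (∫ u : ℂ, F (Complex.exp (↑φ * I) * u)) ∂μφ)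
      = ((2*π : ℝ) : ℂ) * ∫ u : ℂ, F u := by
    have : ∀ φ : ℝ, (∫ u : ℂ, F (Complex.exp (↑φ * I) * u)) = ∫ u : ℂ, F u := fun φ => by
      simpa [Circle.coe_exp] using hrot (Circle.exp φ)
    simp only [this]
    rw [hμφ, setIntegral_const, Real.volume_real_Ioc_of_le (by positivity), sub_zero,
      Complex.real_smul]
  -- RHS of swap
  have hR : (∫ u : ℂ, ∫ φ : ℝ, F (Complex.exp (↑φ * I) * u) ∂μφ)
      = ((2*π : ℝ) : ℂ) * (((π / ν : ℝ) : ℂ) * h 0) := by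
    have hinner : ∀ u : ℂ, (∫ φ : ℝ, F (Complex.exp (↑φ * I) * u) ∂μφ)
        = (((2*π : ℝ) : ℂ) * h 0) * ((rexp (-ν * ‖u‖ ^ 2) : ℝ) : ℂ) := by
      intro u
      have habs : ∀ φ : ℝ, F (Complex.exp (↑φ * I) * u)
          = h (Complex.exp (↑φ * I) * u) * ((rexp (-ν * ‖u‖ ^ 2) : ℝ) : ℂ) := by
        intro φ
        simp only [hF]
        congr 3
        rw [norm_mul, Complex.norm_exp_ofReal_mul_I, one_mul]
      simp only [habs]
      rw [MeasureTheory.integral_mul_const, hμφ, rot_mean_value h hh u, Complex.real_smul]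
    simp only [hinner]
    have hg : (∫ a : ℂ, ((rexp (-ν * ‖a‖ ^ 2) : ℝ) : ℂ)) = ((π / ν : ℝ) : ℂ) := by
      rw [← gauss_val ν hν]
      exact integral_ofReal
    rw [MeasureTheory.integral_const_mul, hg]
    ring
  rw [hL, hR] at swap
  have h2π : ((2*π : ℝ) : ℂ) ≠ 0 := by
    simp only [ne_eq, Complex.ofReal_eq_zero]
    positivity
  exact mul_left_cancel₀ h2π swap

lemma fock (ν : ℝ) (hν : 0 < ν) (g : ℂ → ℂ) (hg : Differentiable ℂ g)
    (hL2 : Integrable (fun w : ℂ => ‖g w‖ ^ 2 * rexp (-ν * ‖w‖ ^ 2)))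
    (z : ℂ) :
    ∫ w : ℂ, g w * Complex.exp ((ν:ℂ) * z * (starRingEnd ℂ w) - (ν:ℂ) * (w * starRingEnd ℂ w))
      = ((π / ν : ℝ) : ℂ) * g z := by
  set h : ℂ → ℂ := fun u => g (z + u) * Complex.exp (-(ν:ℂ) * (starRingEnd ℂ z) * u) with hh
  have hdiff : Differentiable ℂ h :=
    (hg.comp ((differentiable_const _).add differentiable_id)).mul
      (((differentiable_const _).mul differentiable_id).cexp)
  have key_re : ∀ u : ℂ, ((starRingEnd ℂ z) * u).re = (z * starRingEnd ℂ u).re := by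
    intro u
    rw [← Complex.conj_re (z * starRingEnd ℂ u), map_mul, Complex.conj_conj]
  have habs2 : ∀ u : ℂ, ‖z + u‖ ^ 2
      = ‖z‖ ^ 2 + 2 * ((starRingEnd ℂ z) * u).re + ‖u‖ ^ 2 := by
    intro u
    rw [Complex.sq_norm, Complex.sq_norm, Complex.sq_norm, Complex.normSq_add, key_re]
    ring
  have hnorm : ∀ u : ℂ, ‖h u * ((rexp (-ν * ‖u‖ ^ 2) : ℝ) : ℂ)‖
      = ‖g (z + u)‖ *
        rexp (-(ν * ((starRingEnd ℂ z) * u).re) - ν * ‖u‖ ^ 2) := by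
    intro u
    rw [hh]
    have hre : (-(ν:ℂ) * (starRingEnd ℂ z) * u).re = -(ν * ((starRingEnd ℂ z) * u).re) := by
      rw [show -(ν:ℂ) * (starRingEnd ℂ z) * u = ((-ν : ℝ) : ℂ) * ((starRingEnd ℂ z) * u) by
        push_cast; ring]
      rw [Complex.re_ofReal_mul]
      ring
    simp only [norm_mul, map_mul, Complex.norm_exp, Complex.norm_real]
    rw [Real.norm_of_nonneg (Real.exp_pos _).le, mul_assoc, ← Real.exp_add]
    congr 1
    rw [hre]
    ring
  -- integrability
  have hint : Integrable (fun u : ℂ => h u * ((rexp (-ν * ‖u‖ ^ 2) : ℝ) : ℂ)) := by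
    have hp : Integrable (fun u : ℂ => rexp (ν * ‖z‖ ^ 2) *
        (‖g (z + u)‖ ^ 2 * rexp (-ν * ‖z + u‖ ^ 2))) :=
      (hL2.comp_add_left z).const_mul _
    have hq := gauss_int ν hν
    have hB : Integrable (fun u : ℂ => (rexp (ν * ‖z‖ ^ 2) *
        (‖g (z + u)‖ ^ 2 * rexp (-ν * ‖z + u‖ ^ 2))
        + rexp (-ν * ‖u‖ ^ 2)) / 2) := (hp.add hq).div_const 2
    have hcont : Continuous (fun u : ℂ => h u * ((rexp (-ν * ‖u‖ ^ 2) : ℝ) : ℂ)) := by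
      refine (hdiff.continuous).mul (Complex.continuous_ofReal.comp
        (Real.continuous_exp.comp (continuous_const.mul (continuous_norm.pow 2))))
    refine hB.mono' hcont.aestronglyMeasurable (Filter.Eventually.of_forall fun u => ?_)
    rw [hnorm u]
    set G := ‖g (z + u)‖ with hG
    set t := ((starRingEnd ℂ z) * u).re with ht
    set U := ‖u‖ with hU
    set Z := ‖z‖ with hZ
    have hGnn : 0 ≤ G := norm_nonneg _
    have hab : G * rexp (-(ν * t) - ν * U ^ 2)
        = (G * rexp (-(ν * t) - ν * U ^ 2 / 2)) * rexp (-ν * U ^ 2 / 2) := by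
      rw [mul_assoc, ← Real.exp_add]; ring_nf
    have ha2 : (G * rexp (-(ν * t) - ν * U ^ 2 / 2)) ^ 2
        = rexp (ν * Z ^ 2) * (G ^ 2 * rexp (-ν * ‖z + u‖ ^ 2)) := by
      have e1 : (G * rexp (-(ν * t) - ν * U ^ 2 / 2)) ^ 2
          = G ^ 2 * rexp (2 * (-(ν * t) - ν * U ^ 2 / 2)) := by
        rw [mul_pow, ← Real.exp_nat_mul]
        norm_num
      have e2 : rexp (ν * Z ^ 2) * (G ^ 2 * rexp (-ν * (Z ^ 2 + 2 * t + U ^ 2)))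
          = G ^ 2 * rexp (ν * Z ^ 2 + -ν * (Z ^ 2 + 2 * t + U ^ 2)) := by
        rw [Real.exp_add]
        ring
      rw [habs2 u, ← ht, e1, e2]
      congr 1
      ring
    have hb2 : (rexp (-ν * U ^ 2 / 2)) ^ 2 = rexp (-ν * U ^ 2) := by
      rw [← Real.exp_nat_mul]; congr 1; push_cast; ring
    rw [hab, ← ha2, ← hb2]
    have amgm := two_mul_le_add_sq (G * rexp (-(ν * t) - ν * U ^ 2 / 2)) (rexp (-ν * U ^ 2 / 2))
    linarith
  -- pointwise identity
  have hpt : ∀ u : ℂ, g (z + u) * Complex.exp ((ν:ℂ) * z * (starRingEnd ℂ (z+u))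
        - (ν:ℂ) * ((z+u) * starRingEnd ℂ (z+u)))
      = h u * ((rexp (-ν * ‖u‖ ^ 2) : ℝ) : ℂ) := by
    intro u
    simp only [hh]
    rw [Complex.ofReal_exp, mul_assoc (g (z + u)), ← Complex.exp_add]
    congr 2
    have h1 : ((‖u‖ : ℂ)) ^ 2 = u * starRingEnd ℂ u := by
      rw [← Complex.ofReal_pow, Complex.sq_norm, Complex.mul_conj]
    push_cast
    rw [h1, map_add]
    ring
  calc ∫ w : ℂ, g w * Complex.exp ((ν:ℂ) * z * (starRingEnd ℂ w) - (ν:ℂ) * (w * starRingEnd ℂ w))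
      = ∫ u : ℂ, g (z + u) * Complex.exp ((ν:ℂ) * z * (starRingEnd ℂ (z+u))
          - (ν:ℂ) * ((z+u) * starRingEnd ℂ (z+u))) :=
        (MeasureTheory.integral_add_left_eq_self
          (fun w : ℂ => g w * Complex.exp ((ν:ℂ) * z * (starRingEnd ℂ w)
            - (ν:ℂ) * (w * starRingEnd ℂ w))) z).symm
    _ = ∫ u : ℂ, h u * ((rexp (-ν * ‖u‖ ^ 2) : ℝ) : ℂ) := by simp only [hpt]
    _ = ((π / ν : ℝ) : ℂ) * h 0 := fock_zero ν hν h hdiff hint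
    _ = ((π / ν : ℝ) : ℂ) * g z := by rw [hh]; simp

lemma re2 (w : ℂ) : (w ^ 2 + (starRingEnd ℂ w) ^ 2).re = 2 * (w ^ 2).re := by
  rw [Complex.add_re, show (starRingEnd ℂ w) ^ 2 = starRingEnd ℂ (w ^ 2) from
    (map_pow _ _ _).symm, Complex.conj_re]
  ring

lemma coe2 (w : ℂ) : (w ^ 2 + (starRingEnd ℂ w) ^ 2) = ((2 * (w ^ 2).re : ℝ) : ℂ) := by
  rw [show (starRingEnd ℂ w) ^ 2 = starRingEnd ℂ (w ^ 2) from (map_pow _ _ _).symm,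
    Complex.add_conj]

lemma coeabs (w : ℂ) : w * starRingEnd ℂ w = ((‖w‖ ^ 2 : ℝ) : ℂ) := by
  rw [Complex.mul_conj, ← Complex.sq_norm]

lemma reduction (α ν : ℝ) (hν : 0 < ν) (f : ℂ → ℂ) (hf : Differentiable ℂ f)
    (hL2 : Integrable (fun w : ℂ => ‖f w‖ ^ 2
      * rexp (α * (w ^ 2 + (starRingEnd ℂ w) ^ 2).re - ν * ‖w‖ ^ 2))) (z : ℂ) :
    f z = ∫ w : ℂ, ((ν / π : ℝ) : ℂ)
      * Complex.exp (-(α : ℂ) * (z ^ 2 + (starRingEnd ℂ w) ^ 2) + (ν:ℂ) * z * starRingEnd ℂ w)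
      * f w
      * ((rexp (α * (w ^ 2 + (starRingEnd ℂ w) ^ 2).re - ν * ‖w‖ ^ 2) : ℝ) : ℂ) := by
  set g : ℂ → ℂ := fun w => f w * Complex.exp ((α : ℂ) * w ^ 2) with hgdef
  have hg : Differentiable ℂ g :=
    hf.mul (((differentiable_const _).mul (differentiable_pow 2)).cexp)
  have hgL2 : Integrable (fun w : ℂ => ‖g w‖ ^ 2 * rexp (-ν * ‖w‖ ^ 2)) := by
    refine hL2.congr (Filter.Eventually.of_forall fun w => ?_)
    simp only [hgdef, norm_mul, Complex.norm_exp, mul_pow]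
    rw [← Real.exp_nat_mul, mul_assoc, ← Real.exp_add, re2]
    congr 2
    rw [show ((α:ℂ) * w ^ 2).re = α * (w ^ 2).re from Complex.re_ofReal_mul _ _]
    push_cast
    ring
  have key : ∀ w : ℂ, ((ν / π : ℝ) : ℂ)
      * Complex.exp (-(α : ℂ) * (z ^ 2 + (starRingEnd ℂ w) ^ 2) + (ν:ℂ) * z * starRingEnd ℂ w)
      * f w
      * ((rexp (α * (w ^ 2 + (starRingEnd ℂ w) ^ 2).re - ν * ‖w‖ ^ 2) : ℝ) : ℂ)
      = (((ν / π : ℝ) : ℂ) * Complex.exp (-(α : ℂ) * z ^ 2))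
        * (g w * Complex.exp ((ν:ℂ) * z * (starRingEnd ℂ w)
            - (ν:ℂ) * (w * starRingEnd ℂ w))) := by
    intro w
    have hcoe : ((rexp (α * (w ^ 2 + (starRingEnd ℂ w) ^ 2).re - ν * ‖w‖ ^ 2) : ℝ) : ℂ)
        = Complex.exp ((α : ℂ) * (w ^ 2 + (starRingEnd ℂ w) ^ 2)
            - (ν : ℂ) * (w * starRingEnd ℂ w)) := by
      rw [Complex.ofReal_exp]
      congr 1
      rw [re2, coe2, coeabs]
      push_cast
      ring
    rw [hcoe, hgdef]
    simp only []
    rw [show (((ν / π : ℝ) : ℂ) * Complex.exp (-(α : ℂ) * z ^ 2))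
        * ((f w * Complex.exp ((α : ℂ) * w ^ 2)) * Complex.exp ((ν:ℂ) * z * (starRingEnd ℂ w)
            - (ν:ℂ) * (w * starRingEnd ℂ w)))
      = ((ν / π : ℝ) : ℂ) * f w * (Complex.exp (-(α : ℂ) * z ^ 2) * Complex.exp ((α : ℂ) * w ^ 2)
          * Complex.exp ((ν:ℂ) * z * (starRingEnd ℂ w) - (ν:ℂ) * (w * starRingEnd ℂ w))) by ring]
    rw [← Complex.exp_add, ← Complex.exp_add]
    rw [show ((ν / π : ℝ) : ℂ)
      * Complex.exp (-(α : ℂ) * (z ^ 2 + (starRingEnd ℂ w) ^ 2) + (ν:ℂ) * z * starRingEnd ℂ w)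
      * f w
      * Complex.exp ((α : ℂ) * (w ^ 2 + (starRingEnd ℂ w) ^ 2) - (ν : ℂ) * (w * starRingEnd ℂ w))
      = ((ν / π : ℝ) : ℂ) * f w
        * (Complex.exp (-(α : ℂ) * (z ^ 2 + (starRingEnd ℂ w) ^ 2) + (ν:ℂ) * z * starRingEnd ℂ w)
          * Complex.exp ((α : ℂ) * (w ^ 2 + (starRingEnd ℂ w) ^ 2)
              - (ν : ℂ) * (w * starRingEnd ℂ w))) by ring]
    rw [← Complex.exp_add]
    congr 2
    ring
  rw [show (fun w : ℂ => ((ν / π : ℝ) : ℂ)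
      * Complex.exp (-(α : ℂ) * (z ^ 2 + (starRingEnd ℂ w) ^ 2) + (ν:ℂ) * z * starRingEnd ℂ w)
      * f w
      * ((rexp (α * (w ^ 2 + (starRingEnd ℂ w) ^ 2).re - ν * ‖w‖ ^ 2) : ℝ) : ℂ))
    = fun w : ℂ => (((ν / π : ℝ) : ℂ) * Complex.exp (-(α : ℂ) * z ^ 2))
        * (g w * Complex.exp ((ν:ℂ) * z * (starRingEnd ℂ w)
            - (ν:ℂ) * (w * starRingEnd ℂ w))) from funext key]
  rw [MeasureTheory.integral_const_mul, fock ν hν g hg hgL2 z]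
  rw [hgdef]
  simp only []
  rw [show (((ν / π : ℝ) : ℂ) * Complex.exp (-(α : ℂ) * z ^ 2))
      * (((π / ν : ℝ) : ℂ) * (f z * Complex.exp ((α : ℂ) * z ^ 2)))
    = (((ν / π : ℝ) : ℂ) * ((π / ν : ℝ) : ℂ))
      * (Complex.exp (-(α : ℂ) * z ^ 2) * Complex.exp ((α : ℂ) * z ^ 2)) * f z by ring]
  rw [← Complex.exp_add]
  have h1 : (((ν / π : ℝ) : ℂ) * ((π / ν : ℝ) : ℂ)) = 1 := by
    rw [← Complex.ofReal_mul, show (ν / π) * (π / ν) = 1 by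
      field_simp]
    norm_num
  have h2 : (-(α : ℂ) * z ^ 2 + (α : ℂ) * z ^ 2) = 0 := by ring
  rw [h1, h2, Complex.exp_zero]
  ring

/-- The kernel `K^s` reproduces entire functions square-integrable against `ω_s dλ`. -/
theorem statement4 (s : ℝ) (hs0 : 0 < s) (hs1 : s < 1) (f : ℂ → ℂ)
    (hf : Differentiable ℂ f)
    (hL2 : Integrable (fun z : ℂ => ‖f z‖ ^ 2 * omegaS s z)) (z : ℂ) :
    f z = ∫ w : ℂ, Kker s z w * f w * (omegaS s w : ℂ) := by
  have hs2 : (0:ℝ) < 1 - s ^ 2 := by nlinarith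
  have hν : 0 < (1 - s ^ 2) / (2 * s) := div_pos hs2 (by positivity)
  have hL2' : Integrable (fun w : ℂ => ‖f w‖ ^ 2
      * rexp ((1 + s ^ 2) / (4 * s) * (w ^ 2 + (starRingEnd ℂ w) ^ 2).re
        - (1 - s ^ 2) / (2 * s) * ‖w‖ ^ 2)) := by
    simpa only [omegaS] using hL2
  have hred := reduction ((1 + s ^ 2) / (4 * s)) ((1 - s ^ 2) / (2 * s)) hν f hf hL2' z
  rw [show (fun w : ℂ => Kker s z w * f w * ((omegaS s w : ℝ) : ℂ))
      = fun w : ℂ => (((1 - s ^ 2) / (2 * s) / π : ℝ) : ℂ)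
        * Complex.exp (-(((1 + s ^ 2) / (4 * s) : ℝ) : ℂ) * (z ^ 2 + (starRingEnd ℂ w) ^ 2)
            + (((1 - s ^ 2) / (2 * s) : ℝ) : ℂ) * z * starRingEnd ℂ w)
        * f w
        * ((rexp ((1 + s ^ 2) / (4 * s) * (w ^ 2 + (starRingEnd ℂ w) ^ 2).re
            - (1 - s ^ 2) / (2 * s) * ‖w‖ ^ 2) : ℝ) : ℂ) from funext fun w => by
      rw [Kker, omegaS]
      congr 3
      rw [Complex.ofReal_inj]
      field_simp]
  exact hred
end
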